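/- The linear order L^{ω₁} = {x ∈ [-1,1]^{ω₁} : the set of α with x(α) ≠ 0 is countable}, with the lexicographic order, is countably saturated. -/

import Mathlib

open Ordinal

/-- Countable saturation of a linear order. -/
def CSat (L : Type*) [LinearOrder L] : Prop :=
  DenselyOrdered L ∧ NoMinOrder L ∧ NoMaxOrder L ∧
  (∀ x : ℕ → L, StrictMono x → ∀ s, ¬ IsLUB (Set.range x) s) ∧
  (∀ y : ℕ → L, StrictAnti y → ∀ s, ¬ IsGLB (Set.range y) s) ∧
  (∀ x y : ℕ → L, StrictMono x → StrictAnti y → (∀ n, x n < y n) →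
    ∃ z, ∀ n, x n < z ∧ z < y n)

/-- The zero element of `[-1,1]`. -/
def zeroI : Set.Icc (-1 : ℝ) 1 := ⟨0, by norm_num⟩

namespace Stmt6Aux

noncomputable section

abbrev E : Type := Set.Icc (-1 : ℝ) 1

lemma E_le_iff {x y : E} : x ≤ y ↔ (x : ℝ) ≤ (y : ℝ) := Iff.rfl
lemma E_lt_iff {x y : E} : x < y ↔ (x : ℝ) < (y : ℝ) := Iff.rfl

def eh : E := ⟨1/2, by norm_num⟩
def el : E := ⟨-(1/2), by norm_num⟩

lemma el_lt_zero : el < zeroI := by rw [E_lt_iff]; norm_num [el, zeroI]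
lemma zero_lt_eh : zeroI < eh := by rw [E_lt_iff]; norm_num [eh, zeroI]

lemma bddE (u : ℕ → E) : BddAbove (Set.range fun n => (u n : ℝ)) := by
  refine ⟨1, ?_⟩
  rintro r ⟨n, rfl⟩
  exact (u n).2.2

lemma bddE' (u : ℕ → E) : BddBelow (Set.range fun n => (u n : ℝ)) := by
  refine ⟨-1, ?_⟩
  rintro r ⟨n, rfl⟩
  exact (u n).2.1

def supE (u : ℕ → E) : E :=
  ⟨⨆ n, (u n : ℝ), by
    constructor
    · exact le_trans (u 0).2.1 (le_ciSup (bddE u) 0)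
    · exact ciSup_le fun n => (u n).2.2⟩

def infE (u : ℕ → E) : E :=
  ⟨⨅ n, (u n : ℝ), by
    constructor
    · exact le_ciInf fun n => (u n).2.1
    · exact le_trans (ciInf_le (bddE' u) 0) (u 0).2.2⟩

lemma le_supE (u : ℕ → E) (n : ℕ) : u n ≤ supE u := le_ciSup (bddE u) n
lemma supE_le {u : ℕ → E} {w : E} (h : ∀ n, u n ≤ w) : supE u ≤ w :=
  show (⨆ n, (u n : ℝ)) ≤ (w : ℝ) from ciSup_le fun n => h n
lemma infE_le (u : ℕ → E) (n : ℕ) : infE u ≤ u n := ciInf_le (bddE' u) n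
lemma le_infE {u : ℕ → E} {w : E} (h : ∀ n, w ≤ u n) : w ≤ infE u :=
  show (w : ℝ) ≤ (⨅ n, (u n : ℝ)) from le_ciInf fun n => h n

lemma supE_ne {u : ℕ → E} (h : supE u ≠ zeroI) : ∃ n, u n ≠ zeroI := by
  by_contra hc
  push_neg at hc
  apply h
  apply Subtype.ext
  show (⨆ n, (u n : ℝ)) = 0
  have : ∀ n, (u n : ℝ) = 0 := fun n => congrArg Subtype.val (hc n)
  simp only [this, ciSup_const]

lemma infE_ne {u : ℕ → E} (h : infE u ≠ zeroI) : ∃ n, u n ≠ zeroI := by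
  by_contra hc
  push_neg at hc
  apply h
  apply Subtype.ext
  show (⨅ n, (u n : ℝ)) = 0
  have : ∀ n, (u n : ℝ) = 0 := fun n => congrArg Subtype.val (hc n)
  simp only [this, ciInf_const]

variable {ι : Type*} [LinearOrder ι] [WellFoundedLT ι]

lemma lex_lt_iff {f g : ι → E} :
    toLex f < toLex g ↔ ∃ i, (∀ j, j < i → f j = g j) ∧ f i < g i := Iff.rfl

lemma lex_lt_of (f g : ι → E) (i : ι) (hb : ∀ j, j < i → f j = g j) (hi : f i < g i) :
    toLex f < toLex g := lex_lt_iff.2 ⟨i, hb, hi⟩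

lemma coord_le {f g : ι → E} (h : toLex f ≤ toLex g) {i : ι} (hb : ∀ j, j < i → f j = g j) :
    f i ≤ g i := by
  by_contra hc
  exact absurd (lex_lt_of g f i (fun j hj => (hb j hj).symm) (lt_of_not_ge hc)) (not_lt.2 h)

lemma ne_fun_of_lt {f g : ι → E} (h : toLex f < toLex g) : f ≠ g := by
  intro he
  subst he
  exact lt_irrefl _ h

lemma min_diff {f g : ι → E} (h : f ≠ g) :
    ∃ i, (∀ j, j < i → f j = g j) ∧ f i ≠ g i := by
  have hne : {i | f i ≠ g i}.Nonempty := Function.ne_iff.1 h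
  refine ⟨wellFounded_lt.min _ hne, fun j hj => ?_, wellFounded_lt.min_mem _ hne⟩
  by_contra hne'
  exact wellFounded_lt.not_lt_min {i | f i ≠ g i} (x := j) hne' hj

lemma lt_of_lt_agree {f g h : ι → E} {γ : ι}
    (hfg : toLex f < toLex g)
    (hγ : ∀ i, (f i ≠ zeroI ∨ g i ≠ zeroI) → i < γ)
    (hag : ∀ j, j < γ → h j = g j) : toLex f < toLex h := by
  obtain ⟨i, hb, hi⟩ := lex_lt_iff.1 hfg
  have hiγ : i < γ := by
    apply hγ
    by_contra hc
    push_neg at hc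
    exact hi.ne (hc.1.trans hc.2.symm)
  refine lex_lt_of _ _ i (fun j hj => (hb j hj).trans (hag j (hj.trans hiγ)).symm) ?_
  rw [hag i hiγ]
  exact hi

lemma lt_of_agree_lt {f g h : ι → E} {γ : ι}
    (hfg : toLex g < toLex f)
    (hγ : ∀ i, (f i ≠ zeroI ∨ g i ≠ zeroI) → i < γ)
    (hag : ∀ j, j < γ → h j = g j) : toLex h < toLex f := by
  obtain ⟨i, hb, hi⟩ := lex_lt_iff.1 hfg
  have hiγ : i < γ := by
    apply hγ
    by_contra hc
    push_neg at hc
    exact hi.ne (hc.2.trans hc.1.symm)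
  refine lex_lt_of _ _ i (fun j hj => (hag j (hj.trans hiγ)).trans (hb j hj)) ?_
  rw [hag i hiγ]
  exact hi


lemma gap (a b : ℕ → ι → E)
    (ha : StrictMono fun n => toLex (a n))
    (hb : StrictAnti fun n => toLex (b n))
    (hab : ∀ n m, toLex (a n) < toLex (b m)) :
    ∃ z : ι → E,
      {i | z i ≠ zeroI} ⊆ ((⋃ n, {i | a n i ≠ zeroI}) ∪ ⋃ n, {i | b n i ≠ zeroI}) ∧
      (∀ n, toLex (a n) < toLex z) ∧ (∀ m, toLex z < toLex (b m)) := by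
  classical
  have hale : ∀ {n m : ℕ}, n ≤ m → toLex (a n) ≤ toLex (a m) := fun h => ha.monotone h
  have hble : ∀ {n m : ℕ}, n ≤ m → toLex (b m) ≤ toLex (b n) := fun h => hb.antitone h
  have hne : ∀ n, a n ≠ b n := fun n => ne_fun_of_lt (hab n n)
  choose d hd1 hd2 using fun n => min_diff (hne n)
  have dlt : ∀ n, a n (d n) < b n (d n) := fun n =>
    lt_of_le_of_ne (coord_le (hab n n).le (hd1 n)) (hd2 n)
  have agree : ∀ (n : ℕ) (x : ι → E), toLex (a n) ≤ toLex x → toLex x ≤ toLex (b n) →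
      ∀ j, j < d n → x j = a n j := by
    intro n x h1 h2
    refine fun j => wellFounded_lt.induction (C := fun j => j < d n → x j = a n j) j ?_
    intro j IH hj
    have heq : ∀ j', j' < j → a n j' = x j' := fun j' hj' => (IH j' hj' (hj'.trans hj)).symm
    have l1 : a n j ≤ x j := coord_le h1 heq
    have l2 : x j ≤ b n j :=
      coord_le h2 (fun j' hj' => (heq j' hj').symm.trans (hd1 n j' (hj'.trans hj)))
    exact le_antisymm (l2.trans_eq (hd1 n j hj).symm) l1
  have agreea : ∀ {n m : ℕ}, n ≤ m → ∀ j, j < d n → a m j = a n j := fun {n m} h j hj =>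
    agree n (a m) (hale h) (hab m n).le j hj
  have agreeB : ∀ {n m : ℕ}, n ≤ m → ∀ j, j < d n → b m j = a n j := fun {n m} h j hj =>
    agree n (b m) (hab n m).le (hble h) j hj
  have dmono : Monotone d := by
    intro n m hnm
    by_contra hc
    push_neg at hc
    exact hd2 m ((agreea hnm _ hc).trans (agreeB hnm _ hc).symm)
  by_cases hmax : ∃ N, ∀ k, d k ≤ d N
  · -- case (b) : the first-difference indices have a maximum
    obtain ⟨N, hN⟩ := hmax
    have ca : ∀ (n : ℕ) j, j < d N → a (N + n) j = a N j := fun n j hj =>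
      agreea (Nat.le_add_right N n) j hj
    have cb : ∀ (n : ℕ) j, j < d N → b (N + n) j = a N j := fun n j hj =>
      agreeB (Nat.le_add_right N n) j hj
    have hdm : ∀ n : ℕ, d (N + n) = d N := fun n =>
      le_antisymm (hN _) (dmono (Nat.le_add_right N n))
    set u : ℕ → E := fun n => a (N + n) (d N) with hu
    set v : ℕ → E := fun n => b (N + n) (d N) with hv
    have huv : ∀ n, u n < v n := fun n => by
      have h := dlt (N + n); rwa [hdm n] at h
    have humono : ∀ {n m : ℕ}, n ≤ m → u n ≤ u m := fun {n m} h =>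
      coord_le (hale (by omega : N + n ≤ N + m))
        (fun j hj => (ca n j hj).trans (ca m j hj).symm)
    have hvanti : ∀ {n m : ℕ}, n ≤ m → v m ≤ v n := fun {n m} h =>
      coord_le (hble (by omega : N + n ≤ N + m))
        (fun j hj => (cb m j hj).trans (cb n j hj).symm)
    have hcross : ∀ n m, u n < v m := fun n m =>
      lt_of_le_of_lt (humono (le_max_left n m)) (lt_of_lt_of_le (huv _) (hvanti (le_max_right n m)))
    set r : E := supE u with hr
    have hur : ∀ n, u n ≤ r := le_supE u
    have hrv : ∀ m, r ≤ v m := fun m => supE_le (fun n => (hcross n m).le)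
    by_cases hvr : ∃ m₀, v m₀ = r
    · -- the sup is attained from above : use pointwise inf of tails of the b's
      obtain ⟨m₀, hm₀⟩ := hvr
      have hunr : ∀ n, u n < r := fun n => hm₀ ▸ hcross n m₀
      set z : ι → E := fun i =>
        if i < d N then a N i else if i = d N then r else infE (fun k => b (N + k) i) with hz
      have hz1 : ∀ j, j < d N → z j = a N j := fun j hj => by
        simp only [hz]; rw [if_pos hj]
      have hz2 : z (d N) = r := by
        simp only [hz]; rw [if_neg (lt_irrefl _)]; simp
      have hz3 : ∀ i, d N < i → z i = infE (fun k => b (N + k) i) := fun i hi => by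
        simp only [hz]; rw [if_neg (asymm hi), if_neg (ne_of_gt hi)]
      refine ⟨z, ?_, ?_, ?_⟩
      · intro i hi
        simp only [Set.mem_setOf_eq] at hi
        rcases lt_trichotomy i (d N) with h | h | h
        · rw [hz1 i h] at hi
          exact Or.inl (Set.mem_iUnion.2 ⟨N, hi⟩)
        · subst h
          rw [hz2] at hi
          obtain ⟨n, hn⟩ := supE_ne hi
          exact Or.inl (Set.mem_iUnion.2 ⟨N + n, hn⟩)
        · rw [hz3 i h] at hi
          obtain ⟨k, hk⟩ := infE_ne hi
          exact Or.inr (Set.mem_iUnion.2 ⟨N + k, hk⟩)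
      · intro n
        refine lt_of_le_of_lt (hale (Nat.le_add_left n N)) ?_
        refine lex_lt_of _ _ (d N) (fun j hj => (ca n j hj).trans (hz1 j hj).symm) ?_
        rw [hz2]; exact hunr n
      · intro m
        refine lt_of_lt_of_le ?_ (hble (Nat.le_add_left m N))
        rcases lt_or_eq_of_le (hrv m) with hlt | heq
        · exact lex_lt_of _ _ (d N) (fun j hj => (hz1 j hj).trans (cb m j hj).symm)
            (by rw [hz2]; exact hlt)
        · have hm1 : v (m + 1) = r := le_antisymm (heq ▸ hvanti (Nat.le_succ m)) (hrv (m + 1))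
          have hlt1 : toLex (b (N + (m + 1))) < toLex (b (N + m)) := hb (by omega)
          obtain ⟨e, he1, he2⟩ := min_diff (ne_fun_of_lt hlt1)
          have hee : b (N + (m + 1)) e < b (N + m) e := lt_of_le_of_ne (coord_le hlt1.le he1) he2
          have heδ : d N < e := by
            rcases lt_trichotomy e (d N) with h | h | h
            · exact absurd ((cb (m + 1) e h).trans (cb m e h).symm) he2
            · subst h
              exact absurd (hm1.trans heq) he2
            · exact h
          have hzne : z ≠ b (N + m) := by
            intro hEq
            have h1 : z e = b (N + m) e := congrFun hEq e
            have h2 : z e ≤ b (N + (m + 1)) e := by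
              rw [hz3 e heδ]; exact infE_le (fun k => b (N + k) e) (m + 1)
            exact absurd h1 (ne_of_lt (h2.trans_lt hee))
          obtain ⟨i, hi1, hi2⟩ := min_diff hzne
          have hiδ : d N < i := by
            rcases lt_trichotomy i (d N) with h | h | h
            · exact absurd ((hz1 i h).trans (cb m i h).symm) hi2
            · subst h
              exact absurd (hz2.trans heq) hi2
            · exact h
          refine lex_lt_of _ _ i hi1 (lt_of_le_of_ne ?_ hi2)
          rw [hz3 i hiδ]
          exact infE_le (fun k => b (N + k) i) m
    · have hrv' : ∀ m, r < v m := fun m => (hrv m).lt_of_ne (fun h => hvr ⟨m, h.symm⟩)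
      by_cases hur' : ∃ n₀, u n₀ = r
      · -- the sup is attained from below : use pointwise sup of tails of the a's
        set z : ι → E := fun i =>
          if i < d N then a N i else if i = d N then r else supE (fun k => a (N + k) i) with hz
        have hz1 : ∀ j, j < d N → z j = a N j := fun j hj => by
          simp only [hz]; rw [if_pos hj]
        have hz2 : z (d N) = r := by
          simp only [hz]; rw [if_neg (lt_irrefl _)]; simp
        have hz3 : ∀ i, d N < i → z i = supE (fun k => a (N + k) i) := fun i hi => by
          simp only [hz]; rw [if_neg (asymm hi), if_neg (ne_of_gt hi)]
        refine ⟨z, ?_, ?_, ?_⟩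
        · intro i hi
          simp only [Set.mem_setOf_eq] at hi
          rcases lt_trichotomy i (d N) with h | h | h
          · rw [hz1 i h] at hi
            exact Or.inl (Set.mem_iUnion.2 ⟨N, hi⟩)
          · subst h
            rw [hz2] at hi
            obtain ⟨n, hn⟩ := supE_ne hi
            exact Or.inl (Set.mem_iUnion.2 ⟨N + n, hn⟩)
          · rw [hz3 i h] at hi
            obtain ⟨k, hk⟩ := supE_ne hi
            exact Or.inl (Set.mem_iUnion.2 ⟨N + k, hk⟩)
        · intro n
          refine lt_of_le_of_lt (hale (Nat.le_add_left n N)) ?_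
          rcases lt_or_eq_of_le (hur n) with hlt | heq
          · exact lex_lt_of _ _ (d N) (fun j hj => (ca n j hj).trans (hz1 j hj).symm)
              (by rw [hz2]; exact hlt)
          · have hn1 : u (n + 1) = r := le_antisymm (hur (n + 1)) (heq ▸ humono (Nat.le_succ n))
            have hlt1 : toLex (a (N + n)) < toLex (a (N + (n + 1))) := ha (by omega)
            obtain ⟨e, he1, he2⟩ := min_diff (ne_fun_of_lt hlt1)
            have hee : a (N + n) e < a (N + (n + 1)) e :=
              lt_of_le_of_ne (coord_le hlt1.le he1) he2
            have heδ : d N < e := by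
              rcases lt_trichotomy e (d N) with h | h | h
              · exact absurd ((ca n e h).trans (ca (n + 1) e h).symm) he2
              · subst h
                exact absurd (heq.trans hn1.symm) he2
              · exact h
            have hzne : a (N + n) ≠ z := by
              intro hEq
              have h1 : a (N + n) e = z e := congrFun hEq e
              have h2 : a (N + (n + 1)) e ≤ z e := by
                rw [hz3 e heδ]; exact le_supE (fun k => a (N + k) e) (n + 1)
              exact absurd h1 (ne_of_lt (hee.trans_le h2))
            obtain ⟨i, hi1, hi2⟩ := min_diff hzne
            have hiδ : d N < i := by
              rcases lt_trichotomy i (d N) with h | h | h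
              · exact absurd ((ca n i h).trans (hz1 i h).symm) hi2
              · subst h
                exact absurd (heq.trans hz2.symm) hi2
              · exact h
            refine lex_lt_of _ _ i hi1 (lt_of_le_of_ne ?_ hi2)
            rw [hz3 i hiδ]
            exact le_supE (fun k => a (N + k) i) n
        · intro m
          refine lt_of_lt_of_le ?_ (hble (Nat.le_add_left m N))
          exact lex_lt_of _ _ (d N) (fun j hj => (hz1 j hj).trans (cb m j hj).symm)
            (by rw [hz2]; exact hrv' m)
      · -- the sup is attained on neither side
        have hur'' : ∀ n, u n < r := fun n => (hur n).lt_of_ne (fun h => hur' ⟨n, h⟩)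
        set z : ι → E := fun i =>
          if i < d N then a N i else if i = d N then r else zeroI with hz
        have hz1 : ∀ j, j < d N → z j = a N j := fun j hj => by
          simp only [hz]; rw [if_pos hj]
        have hz2 : z (d N) = r := by
          simp only [hz]; rw [if_neg (lt_irrefl _)]; simp
        have hz3 : ∀ i, d N < i → z i = zeroI := fun i hi => by
          simp only [hz]; rw [if_neg (asymm hi), if_neg (ne_of_gt hi)]
        refine ⟨z, ?_, ?_, ?_⟩
        · intro i hi
          simp only [Set.mem_setOf_eq] at hi
          rcases lt_trichotomy i (d N) with h | h | h
          · rw [hz1 i h] at hi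
            exact Or.inl (Set.mem_iUnion.2 ⟨N, hi⟩)
          · subst h
            rw [hz2] at hi
            obtain ⟨n, hn⟩ := supE_ne hi
            exact Or.inl (Set.mem_iUnion.2 ⟨N + n, hn⟩)
          · exact absurd (hz3 i h) hi
        · intro n
          refine lt_of_le_of_lt (hale (Nat.le_add_left n N)) ?_
          exact lex_lt_of _ _ (d N) (fun j hj => (ca n j hj).trans (hz1 j hj).symm)
            (by rw [hz2]; exact hur'' n)
        · intro m
          refine lt_of_lt_of_le ?_ (hble (Nat.le_add_left m N))
          exact lex_lt_of _ _ (d N) (fun j hj => (hz1 j hj).trans (cb m j hj).symm)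
            (by rw [hz2]; exact hrv' m)
  · -- case (a) : unbounded first differences
    push_neg at hmax
    have consist : ∀ i k k', i < d k → i < d k' → a k i = a k' i := by
      intro i k k' h1 h2
      have e1 := agreea (le_max_left k k') i h1
      have e2 := agreea (le_max_right k k') i h2
      rw [← e1, ← e2]
    set mk : (ι → E) → ι → E := fun t i => if h : ∃ k, i < d k then a h.choose i else t i
      with hmk
    have mkD : ∀ (t : ι → E) i (h : ∃ k, i < d k), mk t i = a h.choose i := fun t i h => by
      simp only [hmk]; rw [dif_pos h]
    have mkW : ∀ (t : ι → E) i k, i < d k → mk t i = a k i := fun t i k hk => by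
      have h : ∃ k', i < d k' := ⟨k, hk⟩
      rw [mkD t i h]
      exact consist i h.choose k h.choose_spec hk
    have mkO : ∀ (t : ι → E) i, ¬(∃ k, i < d k) → mk t i = t i := fun t i h => by
      simp only [hmk]; rw [dif_neg h]
    have mkDD : ∀ (t t' : ι → E) i, (∃ k, i < d k) → mk t i = mk t' i := fun t t' i h => by
      rw [mkD t i h, mkD t' i h]
    have LOW : ∀ (t : ι → E) n i, (∃ k, i < d k) → (∀ j, j < i → a n j = mk t j) →
        a n i ≤ mk t i := by
      intro t n i hi hag
      obtain ⟨k, hk⟩ := hi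
      have him : i < d (max k n) := hk.trans_le (dmono (le_max_left k n))
      have hbm : ∀ j, j ≤ i → b (max k n) j = mk t j := fun j hj => by
        have hjm : j < d (max k n) := lt_of_le_of_lt hj him
        rw [mkW t j (max k n) hjm]
        exact (hd1 (max k n) j hjm).symm
      by_contra hc
      push_neg at hc
      have hblt : toLex (b (max k n)) < toLex (a n) :=
        lex_lt_of _ _ i (fun j hj => (hbm j hj.le).trans (hag j hj).symm)
          (by rw [hbm i le_rfl]; exact hc)
      exact absurd (hab n (max k n)) (lt_asymm hblt)
    have HIGH : ∀ (t : ι → E) m i, (∃ k, i < d k) → (∀ j, j < i → b m j = mk t j) →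
        mk t i ≤ b m i := by
      intro t m i hi hag
      obtain ⟨k, hk⟩ := hi
      have hip : i < d (max k m) := hk.trans_le (dmono (le_max_left k m))
      have ham : ∀ j, j ≤ i → a (max k m) j = mk t j := fun j hj =>
        (mkW t j (max k m) (lt_of_le_of_lt hj hip)).symm
      by_contra hc
      push_neg at hc
      have halt : toLex (b m) < toLex (a (max k m)) :=
        lex_lt_of _ _ i (fun j hj => (hag j hj).trans (ham j hj.le).symm)
          (by rw [← ham i le_rfl] at hc; exact hc)
      exact absurd (hab (max k m) m) (lt_asymm halt)
    have dcl : ∀ i i', i' ≤ i → (∃ k, i < d k) → (∃ k, i' < d k) := by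
      rintro i i' h ⟨k, hk⟩
      exact ⟨k, lt_of_le_of_lt h hk⟩
    set tA : ι → E := fun i => supE (fun k => a k i) with htA
    set tB : ι → E := fun i => infE (fun k => b k i) with htB
    have aside_sup : ∀ n, toLex (a n) < toLex (mk tA) := by
      intro n
      have hneq : a n ≠ mk tA := by
        intro hEq
        have h1 : toLex (a n) < toLex (a (n + 1)) := ha (Nat.lt_succ_self n)
        obtain ⟨e, he1, he2⟩ := min_diff (ne_fun_of_lt h1)
        have he3 : a n e < a (n + 1) e := lt_of_le_of_ne (coord_le h1.le he1) he2
        by_cases hDe : ∃ k, e < d k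
        · have hlow := LOW tA (n + 1) e hDe
            (fun j hj => (he1 j hj).symm.trans (congrFun hEq j))
          rw [← congrFun hEq e] at hlow
          exact absurd he3 (not_lt.2 hlow)
        · have h4 : mk tA e = tA e := mkO tA e hDe
          have h5 : a (n + 1) e ≤ tA e := le_supE (fun k => a k e) (n + 1)
          have h6 : a n e = mk tA e := congrFun hEq e
          rw [h4] at h6
          exact absurd (h6 ▸ he3) (not_lt.2 h5)
      obtain ⟨i, hi1, hi2⟩ := min_diff hneq
      by_cases hDi : ∃ k, i < d k
      · exact lex_lt_of _ _ i hi1 (lt_of_le_of_ne (LOW tA n i hDi hi1) hi2)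
      · refine lex_lt_of _ _ i hi1 (lt_of_le_of_ne ?_ hi2)
        rw [mkO tA i hDi]
        exact le_supE (fun k => a k i) n
    have bside_inf : ∀ m, toLex (mk tB) < toLex (b m) := by
      intro m
      have hneq : mk tB ≠ b m := by
        intro hEq
        have h1 : toLex (b (m + 1)) < toLex (b m) := hb (Nat.lt_succ_self m)
        obtain ⟨e, he1, he2⟩ := min_diff (ne_fun_of_lt h1)
        have he3 : b (m + 1) e < b m e := lt_of_le_of_ne (coord_le h1.le he1) he2
        by_cases hDe : ∃ k, e < d k
        · have hhigh := HIGH tB (m + 1) e hDe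
            (fun j hj => (he1 j hj).trans (congrFun hEq j).symm)
          rw [congrFun hEq e] at hhigh
          exact absurd he3 (not_lt.2 hhigh)
        · have h4 : mk tB e = tB e := mkO tB e hDe
          have h5 : tB e ≤ b (m + 1) e := infE_le (fun k => b k e) (m + 1)
          have h6 : mk tB e = b m e := congrFun hEq e
          rw [h4] at h6
          rw [← h6] at he3
          exact absurd he3 (not_lt.2 h5)
      obtain ⟨i, hi1, hi2⟩ := min_diff hneq
      by_cases hDi : ∃ k, i < d k
      · exact lex_lt_of _ _ i hi1
          (lt_of_le_of_ne (HIGH tB m i hDi (fun j hj => (hi1 j hj).symm)) hi2)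
      · refine lex_lt_of _ _ i hi1 (lt_of_le_of_ne ?_ hi2)
        rw [mkO tB i hDi]
        exact infE_le (fun k => b k i) m
    have bside_of : ∀ (t : ι → E),
        (∀ m, ∃ i, (∃ k, i < d k) ∧ b m i ≠ mk t i) → ∀ m, toLex (mk t) < toLex (b m) := by
      intro t hB m
      obtain ⟨i₀, hDi₀, hne₀⟩ := hB m
      have hneq : mk t ≠ b m := fun hEq => hne₀ (congrFun hEq i₀).symm
      obtain ⟨i, hi1, hi2⟩ := min_diff hneq
      have hDi : ∃ k, i < d k := by
        rcases le_or_gt i i₀ with h | h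
        · exact dcl i₀ i h hDi₀
        · exact absurd (hi1 i₀ h).symm hne₀
      exact lex_lt_of _ _ i hi1
        (lt_of_le_of_ne (HIGH t m i hDi (fun j hj => (hi1 j hj).symm)) hi2)
    have aside_of : ∀ (t : ι → E),
        (∀ n, ∃ i, (∃ k, i < d k) ∧ a n i ≠ mk t i) → ∀ n, toLex (a n) < toLex (mk t) := by
      intro t hA n
      obtain ⟨i₀, hDi₀, hne₀⟩ := hA n
      have hneq : a n ≠ mk t := fun hEq => hne₀ (congrFun hEq i₀)
      obtain ⟨i, hi1, hi2⟩ := min_diff hneq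
      have hDi : ∃ k, i < d k := by
        rcases le_or_gt i i₀ with h | h
        · exact dcl i₀ i h hDi₀
        · exact absurd (hi1 i₀ h) hne₀
      exact lex_lt_of _ _ i hi1 (lt_of_le_of_ne (LOW t n i hDi hi1) hi2)
    have suppMk : ∀ (t : ι → E),
        (∀ i, ¬(∃ k, i < d k) → t i ≠ zeroI →
          i ∈ ((⋃ n, {i | a n i ≠ zeroI}) ∪ ⋃ n, {i | b n i ≠ zeroI})) →
        {i | mk t i ≠ zeroI} ⊆ ((⋃ n, {i | a n i ≠ zeroI}) ∪ ⋃ n, {i | b n i ≠ zeroI}) := by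
      intro t ht i hi
      simp only [Set.mem_setOf_eq] at hi
      by_cases hDi : ∃ k, i < d k
      · rw [mkD t i hDi] at hi
        exact Or.inl (Set.mem_iUnion.2 ⟨hDi.choose, hi⟩)
      · rw [mkO t i hDi] at hi
        exact ht i hDi hi
    by_cases hA : ∃ n₀, ∀ i, (∃ k, i < d k) → a n₀ i = mk tA i
    · obtain ⟨n₀, hn₀⟩ := hA
      have hnB : ∀ m, ∃ i, (∃ k, i < d k) ∧ b m i ≠ mk tA i := by
        intro m
        by_contra hc
        push_neg at hc
        obtain ⟨k, hk⟩ := hmax (max n₀ m)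
        have hDdp : ∃ k, d (max n₀ m) < d k := ⟨k, hk⟩
        have e1 : a n₀ (d (max n₀ m)) = mk tA (d (max n₀ m)) := hn₀ _ hDdp
        have e2 : b m (d (max n₀ m)) = mk tA (d (max n₀ m)) := hc _ hDdp
        have e3 : ∀ j, j < d (max n₀ m) → a n₀ j = a (max n₀ m) j := fun j hj =>
          (hn₀ j ⟨max n₀ m, hj⟩).trans (mkW tA j (max n₀ m) hj)
        have c1 : a n₀ (d (max n₀ m)) ≤ a (max n₀ m) (d (max n₀ m)) :=
          coord_le (hale (le_max_left n₀ m)) e3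
        have e4 : ∀ j, j < d (max n₀ m) → b (max n₀ m) j = b m j := fun j hj =>
          (hd1 (max n₀ m) j hj).symm.trans
            ((mkW tA j (max n₀ m) hj).symm.trans (hc j ⟨max n₀ m, hj⟩).symm)
        have c2 : b (max n₀ m) (d (max n₀ m)) ≤ b m (d (max n₀ m)) :=
          coord_le (hble (le_max_right n₀ m)) e4
        have hcontr : mk tA (d (max n₀ m)) < mk tA (d (max n₀ m)) :=
          calc mk tA (d (max n₀ m)) = a n₀ (d (max n₀ m)) := e1.symm
            _ ≤ a (max n₀ m) (d (max n₀ m)) := c1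
            _ < b (max n₀ m) (d (max n₀ m)) := dlt (max n₀ m)
            _ ≤ b m (d (max n₀ m)) := c2
            _ = mk tA (d (max n₀ m)) := e2
        exact lt_irrefl _ hcontr
      refine ⟨mk tA, suppMk tA ?_, aside_sup, bside_of tA hnB⟩
      intro i _ hti
      obtain ⟨k, hk⟩ := supE_ne (u := fun k => a k i) hti
      exact Or.inl (Set.mem_iUnion.2 ⟨k, hk⟩)
    · push_neg at hA
      have hA' : ∀ n, ∃ i, (∃ k, i < d k) ∧ a n i ≠ mk tB i := by
        intro n
        obtain ⟨i, hDi, hne'⟩ := hA n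
        exact ⟨i, hDi, by rw [← mkDD tA tB i hDi]; exact hne'⟩
      refine ⟨mk tB, suppMk tB ?_, aside_of tB hA', bside_inf⟩
      intro i _ hti
      obtain ⟨k, hk⟩ := infE_ne (u := fun k => b k i) hti
      exact Or.inr (Set.mem_iUnion.2 ⟨k, hk⟩)

universe u

lemma bounded (S : Set (ω_ 1).ToType) (hS : S.Countable) :
    ∃ γ : (ω_ 1).ToType, ∀ i ∈ S, i < γ := by
  have hne0 : Nonempty (ω_ 1).ToType := toType_nonempty_iff_ne_zero.2 (omega_pos 1).ne'
  rcases S.eq_empty_or_nonempty with rfl | hne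
  · exact ⟨Classical.arbitrary _, by simp⟩
  · obtain ⟨f, hf⟩ := Set.Countable.exists_eq_range hS hne
    let e := ToType.mk (o := ω_ 1)
    have h1 : ∀ n, ((e.symm (f n) : Set.Iio (ω_ 1)) : Ordinal) < ω_ 1 := fun n => (e.symm (f n)).2
    have h2 : (⨆ n, ((e.symm (f n) : Set.Iio (ω_ 1)) : Ordinal)) < ω_ 1 :=
      Ordinal.iSup_lt_omega_one h1
    have h3 : Order.succ (⨆ n, ((e.symm (f n) : Set.Iio (ω_ 1)) : Ordinal)) < ω_ 1 :=
      (Cardinal.isSuccLimit_omega 1).succ_lt h2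
    refine ⟨e ⟨_, h3⟩, ?_⟩
    intro i hi
    rw [hf] at hi
    obtain ⟨n, rfl⟩ := hi
    have hlt : e.symm (f n) < ⟨_, h3⟩ := by
      show ((e.symm (f n) : Set.Iio (ω_ 1)) : Ordinal) < _
      exact (Ordinal.le_iSup (fun n => ((e.symm (f n) : Set.Iio (ω_ 1)) : Ordinal)) n).trans_lt (Order.lt_succ _)
    calc f n = e (e.symm (f n)) := (e.apply_symm_apply _).symm
      _ < e ⟨_, h3⟩ := e.lt_iff_lt.2 hlt


end

end Stmt6Aux

open Stmt6Aux

/-- `𝕃^{ω₁}`: points of the lexicographic power `[-1,1]^{ω₁}` with countable support. -/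
theorem stmt6 :
    CSat {x : Lex ((ω_ 1).ToType → Set.Icc (-1 : ℝ) 1) //
      {α | ofLex x α ≠ zeroI}.Countable} := by

  classical
  refine ⟨?_, ?_, ?_, ?_, ?_, ?_⟩
  · -- densely ordered
    constructor
    intro x y hxy
    obtain ⟨γ, hγ⟩ := bounded ({α | ofLex x.1 α ≠ zeroI} ∪ {α | ofLex y.1 α ≠ zeroI})
      (x.2.union y.2)
    have hxγ : ofLex x.1 γ = zeroI := by
      by_contra h
      exact lt_irrefl γ (hγ γ (Or.inl h))
    have hcnt : {α | Function.update (ofLex x.1) γ eh α ≠ zeroI}.Countable := by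
      refine (x.2.union (Set.countable_singleton γ)).mono ?_
      intro i hi
      simp only [Set.mem_setOf_eq] at hi
      by_cases h : i = γ
      · exact Or.inr h
      · rw [Function.update_of_ne h] at hi
        exact Or.inl hi
    refine ⟨⟨toLex (Function.update (ofLex x.1) γ eh), hcnt⟩, ?_, ?_⟩
    · refine Subtype.coe_lt_coe.mp ?_
      exact Pi.lt_toLex_update_self_iff.2 (lt_of_eq_of_lt hxγ zero_lt_eh)
    · refine Subtype.coe_lt_coe.mp ?_
      refine lt_of_agree_lt (γ := γ) (Subtype.coe_lt_coe.2 hxy) ?_ ?_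
      · intro i hi
        refine hγ i ?_
        rcases hi with h | h
        · exact Or.inr h
        · exact Or.inl h
      · intro j hj
        exact Function.update_of_ne (ne_of_lt hj) _ _
  · -- no minimum
    constructor
    intro x
    obtain ⟨γ, hγ⟩ := bounded {α | ofLex x.1 α ≠ zeroI} x.2
    have hxγ : ofLex x.1 γ = zeroI := by
      by_contra h
      exact lt_irrefl γ (hγ γ h)
    have hcnt : {α | Function.update (ofLex x.1) γ el α ≠ zeroI}.Countable := by
      refine (x.2.union (Set.countable_singleton γ)).mono ?_
      intro i hi
      simp only [Set.mem_setOf_eq] at hi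
      by_cases h : i = γ
      · exact Or.inr h
      · rw [Function.update_of_ne h] at hi
        exact Or.inl hi
    refine ⟨⟨toLex (Function.update (ofLex x.1) γ el), hcnt⟩, ?_⟩
    refine Subtype.coe_lt_coe.mp ?_
    exact Pi.toLex_update_lt_self_iff.2 (lt_of_lt_of_eq el_lt_zero hxγ.symm)
  · -- no maximum
    constructor
    intro x
    obtain ⟨γ, hγ⟩ := bounded {α | ofLex x.1 α ≠ zeroI} x.2
    have hxγ : ofLex x.1 γ = zeroI := by
      by_contra h
      exact lt_irrefl γ (hγ γ h)
    have hcnt : {α | Function.update (ofLex x.1) γ eh α ≠ zeroI}.Countable := by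
      refine (x.2.union (Set.countable_singleton γ)).mono ?_
      intro i hi
      simp only [Set.mem_setOf_eq] at hi
      by_cases h : i = γ
      · exact Or.inr h
      · rw [Function.update_of_ne h] at hi
        exact Or.inl hi
    refine ⟨⟨toLex (Function.update (ofLex x.1) γ eh), hcnt⟩, ?_⟩
    refine Subtype.coe_lt_coe.mp ?_
    exact Pi.lt_toLex_update_self_iff.2 (lt_of_eq_of_lt hxγ zero_lt_eh)
  · -- no countable suprema
    intro x hx s hs
    obtain ⟨γ, hγ⟩ := bounded
      ({α | ofLex s.1 α ≠ zeroI} ∪ ⋃ n, {α | ofLex (x n).1 α ≠ zeroI})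
      (s.2.union (Set.countable_iUnion fun n => (x n).2))
    have hsγ : ofLex s.1 γ = zeroI := by
      by_contra h
      exact lt_irrefl γ (hγ γ (Or.inl h))
    have hcnt : {α | Function.update (ofLex s.1) γ el α ≠ zeroI}.Countable := by
      refine (s.2.union (Set.countable_singleton γ)).mono ?_
      intro i hi
      simp only [Set.mem_setOf_eq] at hi
      by_cases h : i = γ
      · exact Or.inr h
      · rw [Function.update_of_ne h] at hi
        exact Or.inl hi
    set zL : {x : Lex ((ω_ 1).ToType → Set.Icc (-1 : ℝ) 1) //
        {α | ofLex x α ≠ zeroI}.Countable} :=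
      ⟨toLex (Function.update (ofLex s.1) γ el), hcnt⟩ with hzL
    have hzs : zL < s := by
      refine Subtype.coe_lt_coe.mp ?_
      exact Pi.toLex_update_lt_self_iff.2 (lt_of_lt_of_eq el_lt_zero hsγ.symm)
    have hub : zL ∈ upperBounds (Set.range x) := by
      rintro w ⟨n, rfl⟩
      have h1 : x n < s :=
        lt_of_lt_of_le (hx (Nat.lt_succ_self n)) (hs.1 (Set.mem_range_self (n + 1)))
      have h2 : toLex (ofLex (x n).1) < toLex (Function.update (ofLex s.1) γ el) := by
        refine lt_of_lt_agree (γ := γ) (Subtype.coe_lt_coe.2 h1) ?_ ?_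
        · intro i hi
          refine hγ i ?_
          rcases hi with h | h
          · exact Or.inr (Set.mem_iUnion.2 ⟨n, h⟩)
          · exact Or.inl h
        · intro j hj
          exact Function.update_of_ne (ne_of_lt hj) _ _
      exact le_of_lt (Subtype.coe_lt_coe.mp h2)
    exact absurd (hs.2 hub) (not_le.2 hzs)
  · -- no countable infima
    intro y hy s hs
    obtain ⟨γ, hγ⟩ := bounded
      ({α | ofLex s.1 α ≠ zeroI} ∪ ⋃ n, {α | ofLex (y n).1 α ≠ zeroI})
      (s.2.union (Set.countable_iUnion fun n => (y n).2))
    have hsγ : ofLex s.1 γ = zeroI := by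
      by_contra h
      exact lt_irrefl γ (hγ γ (Or.inl h))
    have hcnt : {α | Function.update (ofLex s.1) γ eh α ≠ zeroI}.Countable := by
      refine (s.2.union (Set.countable_singleton γ)).mono ?_
      intro i hi
      simp only [Set.mem_setOf_eq] at hi
      by_cases h : i = γ
      · exact Or.inr h
      · rw [Function.update_of_ne h] at hi
        exact Or.inl hi
    set zL : {x : Lex ((ω_ 1).ToType → Set.Icc (-1 : ℝ) 1) //
        {α | ofLex x α ≠ zeroI}.Countable} :=
      ⟨toLex (Function.update (ofLex s.1) γ eh), hcnt⟩ with hzL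
    have hzs : s < zL := by
      refine Subtype.coe_lt_coe.mp ?_
      exact Pi.lt_toLex_update_self_iff.2 (lt_of_eq_of_lt hsγ zero_lt_eh)
    have hlb : zL ∈ lowerBounds (Set.range y) := by
      rintro w ⟨n, rfl⟩
      have h1 : s < y n :=
        lt_of_le_of_lt (hs.1 (Set.mem_range_self (n + 1))) (hy (Nat.lt_succ_self n))
      have h2 : toLex (Function.update (ofLex s.1) γ eh) < toLex (ofLex (y n).1) := by
        refine lt_of_agree_lt (γ := γ) (Subtype.coe_lt_coe.2 h1) ?_ ?_
        · intro i hi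
          refine hγ i ?_
          rcases hi with h | h
          · exact Or.inr (Set.mem_iUnion.2 ⟨n, h⟩)
          · exact Or.inl h
        · intro j hj
          exact Function.update_of_ne (ne_of_lt hj) _ _
      exact le_of_lt (Subtype.coe_lt_coe.mp h2)
    exact absurd (hs.2 hlb) (not_le.2 hzs)
  · -- no (ω,ω)-gaps
    intro x y hx hy hxy
    have cross : ∀ n m, x n < y m := fun n m =>
      lt_of_le_of_lt (hx.monotone (le_max_left n m))
        (lt_of_lt_of_le (hxy (max n m)) (hy.antitone (le_max_right n m)))
    obtain ⟨z, hzsupp, hza, hzb⟩ := gap (fun n => ofLex (x n).1) (fun m => ofLex (y m).1)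
      (fun n m hnm => Subtype.coe_lt_coe.2 (hx hnm))
      (fun n m hnm => Subtype.coe_lt_coe.2 (hy hnm))
      (fun n m => Subtype.coe_lt_coe.2 (cross n m))
    have hcnt : {α | ofLex (toLex z) α ≠ zeroI}.Countable := by
      refine ((Set.countable_iUnion fun n => (x n).2).union
        (Set.countable_iUnion fun n => (y n).2)).mono ?_
      exact hzsupp
    refine ⟨⟨toLex z, hcnt⟩, fun n => ⟨?_, ?_⟩⟩
    · exact Subtype.coe_lt_coe.mp (hza n)
    · exact Subtype.coe_lt_coe.mp (hzb n)
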